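/- Assume 1 ≤ k(n) < d(n) for all n ≥ 1. Set ω = k(1)/(k(1)+d(1)), assume the series ω' = ∑_{n=2}^∞ k(n)/(k(n)+d(n)) converges, and assume ω' < ω < 1/2. Then for all n ≥ 1 one has ω ≤ t(n)/r(n) ≤ ω + ω' < 2ω. -/

import Mathlib

/-- with 1 ≤ k(n) < d(n) for n ≥ 1, ω = k(1)/(k(1)+d(1)),
ω' = ∑_{n=2}^∞ k(n)/(k(n)+d(n)) (assumed summable), and ω' < ω < 1/2,
for all n ≥ 1 one has ω ≤ t(n)/r(n) ≤ ω + ω' < 2ω. -/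
theorem stmt_2 (d k : ℕ → ℕ) (hd0 : d 0 = 1) (hk0 : k 0 = 0)
    (hk : ∀ n, 1 ≤ n → 1 ≤ k n) (hkd : ∀ n, 1 ≤ n → k n < d n)
    (r t : ℕ → ℕ)
    (hr : ∀ n, r n = ∏ j ∈ Finset.range (n + 1), (d j + k j))
    (ht0 : t 0 = 0)
    (ht : ∀ n, t (n + 1) = d (n + 1) * t n + k (n + 1) * (r n - t n))
    (ω ω' : ℝ)
    (hω : ω = (k 1 : ℝ) / ((k 1 : ℝ) + (d 1 : ℝ)))
    (hsum : Summable (fun n : ℕ => (k (n + 2) : ℝ) / ((k (n + 2) : ℝ) + (d (n + 2) : ℝ))))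
    (hω' : ω' = ∑' n : ℕ, (k (n + 2) : ℝ) / ((k (n + 2) : ℝ) + (d (n + 2) : ℝ)))
    (h1 : ω' < ω) (h2 : ω < 1 / 2) :
    ∀ n : ℕ, 1 ≤ n →
      ω ≤ (t n : ℝ) / (r n : ℝ) ∧ (t n : ℝ) / (r n : ℝ) ≤ ω + ω' ∧ ω + ω' < 2 * ω := by
  set f : ℕ → ℝ := fun n => (k (n + 2) : ℝ) / ((k (n + 2) : ℝ) + (d (n + 2) : ℝ)) with hf
  have hl : ∀ j, 0 < d j + k j := by
    intro j
    cases j with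
    | zero => simp [hd0, hk0]
    | succ m => have := hk (m + 1) (by omega); omega
  have hrpos : ∀ n, 0 < r n := by
    intro n; rw [hr]; exact Finset.prod_pos (fun j _ => hl j)
  have hrsucc : ∀ n, r (n + 1) = (d (n + 1) + k (n + 1)) * r n := by
    intro n; rw [hr, hr, Finset.prod_range_succ]; ring
  have htle : ∀ n, t n ≤ r n := by
    intro n
    induction n with
    | zero => rw [ht0]; exact Nat.zero_le _
    | succ m ih =>
      rw [ht, hrsucc]
      calc d (m + 1) * t m + k (m + 1) * (r m - t m)
          ≤ d (m + 1) * r m + k (m + 1) * r m := by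
            exact Nat.add_le_add (Nat.mul_le_mul_left _ ih)
              (Nat.mul_le_mul_left _ (Nat.sub_le _ _))
        _ = (d (m + 1) + k (m + 1)) * r m := by ring
  have hR : ∀ n, (0 : ℝ) < (r n : ℝ) := fun n => by exact_mod_cast hrpos n
  have hT0 : ∀ n, (0 : ℝ) ≤ (t n : ℝ) := fun n => Nat.cast_nonneg _
  have hr0 : r 0 = 1 := by rw [hr]; simp [hd0, hk0]
  have ht1 : t 1 = k 1 := by rw [ht 0, ht0, hr0]; simp
  have hr1 : r 1 = k 1 + d 1 := by rw [hrsucc 0, hr0]; ring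
  have hx1 : (t 1 : ℝ) / (r 1 : ℝ) = ω := by
    rw [ht1, hr1, hω]; push_cast; ring
  have hfnn : ∀ i, 0 ≤ f i := by
    intro i
    have hden : (0 : ℝ) < (k (i + 2) : ℝ) + (d (i + 2) : ℝ) := by
      have := hl (i + 2)
      have : 0 < k (i + 2) + d (i + 2) := by omega
      exact_mod_cast this
    simp only [hf]
    exact div_nonneg (Nat.cast_nonneg _) hden.le
  have key : ∀ m : ℕ, ω ≤ (t (m + 1) : ℝ) / (r (m + 1) : ℝ) ∧
      (t (m + 1) : ℝ) / (r (m + 1) : ℝ) ≤ ω + ∑ i ∈ Finset.range m, f i := by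
    intro m
    induction m with
    | zero => simp [hx1]
    | succ m ih =>
      obtain ⟨hlo, hhi⟩ := ih
      set n := m + 1 with hn
      set D : ℝ := (d (n + 1) : ℝ) with hD
      set K : ℝ := (k (n + 1) : ℝ) with hK
      set R : ℝ := (r n : ℝ) with hRdef
      set T : ℝ := (t n : ℝ) with hTdef
      have hK1 : (1 : ℝ) ≤ K := by
        rw [hK]; exact_mod_cast hk (n + 1) (by omega)
      have hKD : K < D := by
        rw [hK, hD]; exact_mod_cast hkd (n + 1) (by omega)
      have hRpos : (0 : ℝ) < R := hR n
      have hTnn : (0 : ℝ) ≤ T := hT0 n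
      have hDKpos : (0 : ℝ) < D + K := by linarith
      have hTr : (t (n + 1) : ℝ) = D * T + K * (R - T) := by
        rw [ht n, Nat.cast_add, Nat.cast_mul, Nat.cast_mul, Nat.cast_sub (htle n)]
      have hRr : (r (n + 1) : ℝ) = (D + K) * R := by
        rw [hrsucc n]; push_cast; ring
      have hfm : f m = K / (K + D) := by
        simp only [hf, hK, hD, hn]
      have hfmKD : f m * (K + D) = K := by
        rw [hfm]; field_simp [(by linarith : (K + D) ≠ 0)]
      have hfmnn : 0 ≤ f m := hfnn m
      have hωR : ω * R ≤ T := (le_div_iff₀ hRpos).mp hlo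
      have hThi : T ≤ (ω + ∑ i ∈ Finset.range m, f i) * R :=
        (div_le_iff₀ hRpos).mp hhi
      constructor
      · rw [hTr, hRr, le_div_iff₀ (by positivity)]
        nlinarith [mul_nonneg (by linarith : (0:ℝ) ≤ D - K) (by linarith : (0:ℝ) ≤ T - ω * R),
          mul_nonneg (mul_nonneg (by linarith : (0:ℝ) ≤ K) hRpos.le)
            (by linarith : (0:ℝ) ≤ 1 - 2 * ω)]
      · rw [hTr, hRr, div_le_iff₀ (by positivity), Finset.sum_range_succ]
        have hexp : (ω + (∑ i ∈ Finset.range m, f i + f m)) * ((D + K) * R)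
            = (ω + ∑ i ∈ Finset.range m, f i) * R * (D + K) + f m * (K + D) * R := by
          ring
        rw [hexp, hfmKD]
        have h3 : T * (D + K) ≤ (ω + ∑ i ∈ Finset.range m, f i) * R * (D + K) :=
          mul_le_mul_of_nonneg_right hThi hDKpos.le
        have h4 : (0 : ℝ) ≤ K * T := mul_nonneg (by linarith) hTnn
        calc D * T + K * (R - T) = T * (D + K) + K * R - 2 * (K * T) := by ring
          _ ≤ T * (D + K) + K * R := by linarith
          _ ≤ (ω + ∑ i ∈ Finset.range m, f i) * R * (D + K) + K * R := by linarith
  have hSle : ∀ m : ℕ, ∑ i ∈ Finset.range m, f i ≤ ω' := by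
    intro m
    rw [hω']
    exact Summable.sum_le_tsum (Finset.range m) (fun i _ => hfnn i) hsum
  intro n hn
  obtain ⟨m, rfl⟩ : ∃ m, n = m + 1 := ⟨n - 1, by omega⟩
  obtain ⟨hlo, hhi⟩ := key m
  refine ⟨hlo, le_trans hhi (by linarith [hSle m]), by linarith⟩
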